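/- Let K be a real quadratic number field with ring of integers O and real embeddings σ₁, σ₂, and set Ñ(q) = σ₁(q)² + σ₂(q)² for q ∈ O. There exists a constant c > 0 depending only on K such that for every nonzero principal ideal 𝔞 of O, Σ_{q ∈ O, (q) = 𝔞} 1/Ñ(q) ≤ c/N(𝔞), where the sum runs over all generators q of 𝔞. -/

import Mathlib

open NumberField

/-- A real embedding of `K`, applied to an algebraic integer of `K`. -/
noncomputable def embInt (K : Type) [Field K] [NumberField K] (σ : K →+* ℝ) (p : 𝓞 K) : ℝ :=
  σ (algebraMap (𝓞 K) K p)

open scoped Classical in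
/-- With `finrank ℚ K = 2` and two distinct real embeddings, the set of complex
embeddings is exactly the two obvious ones. -/
lemma aux_univ_emb (K : Type) [Field K] [NumberField K]
    (hdeg : Module.finrank ℚ K = 2) (σ₁ σ₂ : K →+* ℝ) (hσ : σ₁ ≠ σ₂) :
    (Finset.univ : Finset (K →+* ℂ)) =
      {Complex.ofRealHom.comp σ₁, Complex.ofRealHom.comp σ₂} := by
  have hne : Complex.ofRealHom.comp σ₁ ≠ Complex.ofRealHom.comp σ₂ := by
    intro h
    apply hσ
    ext x
    have := RingHom.congr_fun h x
    simpa using this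
  symm
  apply Finset.eq_univ_of_card
  rw [Finset.card_insert_of_notMem (by simpa using hne), Finset.card_singleton,
    NumberField.Embeddings.card K ℂ, hdeg]

lemma aux_emb_cases (K : Type) [Field K] [NumberField K]
    (hdeg : Module.finrank ℚ K = 2) (σ₁ σ₂ : K →+* ℝ) (hσ : σ₁ ≠ σ₂) (φ : K →+* ℂ) :
    φ = Complex.ofRealHom.comp σ₁ ∨ φ = Complex.ofRealHom.comp σ₂ := by
  classical
  have h : φ ∈ ({Complex.ofRealHom.comp σ₁, Complex.ofRealHom.comp σ₂} :
      Finset (K →+* ℂ)) := by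
    rw [← aux_univ_emb K hdeg σ₁ σ₂ hσ]; exact Finset.mem_univ φ
  simpa using h

lemma aux_abs_norm (K : Type) [Field K] [NumberField K]
    (hdeg : Module.finrank ℚ K = 2) (σ₁ σ₂ : K →+* ℝ) (hσ : σ₁ ≠ σ₂) (x : K) :
    |((Algebra.norm ℚ x : ℚ) : ℝ)| = |σ₁ x| * |σ₂ x| := by
  classical
  have h : (algebraMap ℚ ℂ) ((Algebra.norm ℚ) x) = ∏ φ : K →+* ℂ, φ x := by
    rw [Algebra.norm_eq_prod_embeddings]
    exact (Fintype.prod_equiv (RingHom.equivRatAlgHom K ℂ) (fun φ => φ x) (fun σ => σ x)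
      (fun φ => rfl)).symm
  rw [aux_univ_emb K hdeg σ₁ σ₂ hσ] at h
  have hne : Complex.ofRealHom.comp σ₁ ≠ Complex.ofRealHom.comp σ₂ := by
    intro hc
    apply hσ; ext y
    have := RingHom.congr_fun hc y
    simpa using this
  rw [Finset.prod_insert (by simpa using hne), Finset.prod_singleton] at h
  have h2 := congrArg (fun z : ℂ => ‖z‖) h
  simp only [norm_mul, RingHom.comp_apply, Complex.ofRealHom_eq_coe, Complex.norm_real,
    Real.norm_eq_abs] at h2
  rw [eq_ratCast, ← Complex.ofReal_ratCast, Complex.norm_real, Real.norm_eq_abs] at h2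
  exact h2

lemma aux_gen_norm (K : Type) [Field K] [NumberField K]
    (hdeg : Module.finrank ℚ K = 2) (σ₁ σ₂ : K →+* ℝ) (hσ : σ₁ ≠ σ₂) (q : 𝓞 K) :
    ((Ideal.absNorm (Ideal.span {q}) : ℕ) : ℝ)
      = |σ₁ (algebraMap (𝓞 K) K q)| * |σ₂ (algebraMap (𝓞 K) K q)| := by
  rw [← aux_abs_norm K hdeg σ₁ σ₂ hσ, Ideal.absNorm_span_singleton]
  rw [← Algebra.coe_norm_int]
  push_cast [Nat.cast_natAbs]
  norm_num

/-- Key real inequality: if `x * y = N` with `x, y > 0` then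
`1/(x^2+y^2)` is bounded by a geometric factor indexed by the dyadic window of `x/√N`. -/
lemma aux_geom_bound (N x y : ℝ) (hN : 0 < N) (hx : 0 < x) (hy : 0 < y)
    (hxy : x * y = N) :
    1 / (x ^ 2 + y ^ 2) ≤ 4 / N * ((1:ℝ)/2) ^ (Int.log 2 (x / Real.sqrt N)).natAbs := by
  set s : ℝ := Real.sqrt N with hs
  have hs0 : 0 < s := Real.sqrt_pos.mpr hN
  have hs2 : s ^ 2 = N := Real.sq_sqrt hN.le
  set k : ℤ := Int.log 2 (x / s) with hk
  set t : ℝ := (2:ℝ) ^ k with ht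
  have ht0 : 0 < t := zpow_pos (by norm_num) k
  have h1 : s * t ≤ x := by
    have h1' := Int.zpow_log_le_self (b := 2) (R := ℝ) (by norm_num) (div_pos hx hs0)
    have h1'' : t ≤ x / s := by
      rw [ht, hk]
      exact_mod_cast h1'
    calc s * t ≤ s * (x / s) := by nlinarith
      _ = x := by field_simp
  have h2 : x < s * (2 * t) := by
    have h2' := Int.lt_zpow_succ_log_self (b := 2) (R := ℝ) (by norm_num) (x / s)
    have hcast : ((2:ℕ):ℝ) ^ (Int.log 2 (x / s) + 1) = 2 * t := by
      push_cast
      rw [ht, hk, zpow_add₀ (by norm_num : (2:ℝ) ≠ 0)]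
      ring
    rw [hcast] at h2'
    calc x = s * (x / s) := by field_simp
      _ < s * (2 * t) := by nlinarith
  have hmain : N / 4 * ((2:ℝ)) ^ (k.natAbs) ≤ x ^ 2 + y ^ 2 := by
    rcases le_or_gt 0 k with hk0 | hk0
    · have htn : ((2:ℝ)) ^ (k.natAbs) = t := by
        rw [ht, ← zpow_natCast, Int.natAbs_of_nonneg hk0]
      rw [htn]
      have ht1 : 1 ≤ t := one_le_zpow₀ (by norm_num) hk0
      have e1 : (s * t) * (s * t) ≤ x * x := mul_self_le_mul_self (by positivity) h1
      have e2' : t * 1 ≤ t * t := mul_le_mul_of_nonneg_left ht1 ht0.le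
      have e2 : N * t ≤ N * (t * t) := mul_le_mul_of_nonneg_left (by linarith) hN.le
      nlinarith [sq_nonneg y]
    · have htn : ((2:ℝ)) ^ (k.natAbs) = t⁻¹ := by
        rw [ht, ← zpow_natCast, ← zpow_neg]
        congr 1
        omega
      rw [htn]
      set u : ℝ := t⁻¹ with hu
      have hu0 : 0 < u := by positivity
      have htu : t * u = 1 := mul_inv_cancel₀ ht0.ne'
      have hu1 : 1 ≤ u := by
        have ht1 : t ≤ 1 := by
          rw [ht]
          exact zpow_le_one_of_nonpos₀ (by norm_num) hk0.le
        nlinarith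
      have hy2 : s * u < 2 * y := by
        have h3 : x * y < (s * (2 * t)) * y := by nlinarith
        rw [hxy, ← hs2] at h3
        have h4 : s < 2 * t * y := by nlinarith
        calc s * u < (2 * t * y) * u := by nlinarith
          _ = 2 * y * (t * u) := by ring
          _ = 2 * y := by rw [htu]; ring
      have e2 : (s * u) * (s * u) < (2 * y) * (2 * y) :=
        mul_self_lt_mul_self (by positivity) hy2
      have e3 : u ≤ u * u := by nlinarith
      have e4 : N / 4 * u ≤ N / 4 * (u * u) := by nlinarith
      nlinarith [sq_nonneg x]
  have hpos : (0:ℝ) < N / 4 * ((2:ℝ)) ^ (k.natAbs) := by positivity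
  have hfin := one_div_le_one_div_of_le hpos hmain
  refine hfin.trans (le_of_eq ?_)
  rw [div_pow, one_pow]
  rw [eq_comm]
  field_simp

/-- Finite geometric sum over distinct integers. -/
lemma aux_sum_geom (T : Finset ℤ) : ∑ j ∈ T, ((1:ℝ)/2) ^ j.natAbs ≤ 4 := by
  classical
  rw [Finset.sum_comp (fun n : ℕ => ((1:ℝ)/2) ^ n) Int.natAbs]
  have h1 : ∀ n ∈ T.image Int.natAbs,
      (T.filter (fun a => a.natAbs = n)).card • (((1:ℝ)/2) ^ n) ≤ 2 * ((1:ℝ)/2) ^ n := by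
    intro n _
    have hc : (T.filter (fun a => a.natAbs = n)).card ≤ 2 := by
      refine le_trans (Finset.card_le_card (t := ({(n:ℤ), -(n:ℤ)} : Finset ℤ)) ?_) ?_
      · intro a ha
        rw [Finset.mem_filter] at ha
        have := Int.natAbs_eq_iff.mp ha.2
        simpa using this
      · exact (Finset.card_insert_le _ _).trans (by simp)
    rw [nsmul_eq_mul]
    exact mul_le_mul_of_nonneg_right (by exact_mod_cast hc) (by positivity)
  calc ∑ n ∈ T.image Int.natAbs, (T.filter (fun a => a.natAbs = n)).card • (((1:ℝ)/2) ^ n)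
      ≤ ∑ n ∈ T.image Int.natAbs, 2 * ((1:ℝ)/2) ^ n := Finset.sum_le_sum h1
    _ = 2 * ∑ n ∈ T.image Int.natAbs, ((1:ℝ)/2) ^ n := by rw [Finset.mul_sum]
    _ ≤ 2 * 2 := by
        have h2 : ∑ n ∈ T.image Int.natAbs, ((1:ℝ)/2) ^ n ≤ 2 :=
          le_of_le_of_eq
            (summable_geometric_two.sum_le_tsum _ (fun i _ => by positivity))
            tsum_geometric_two
        nlinarith
    _ = 4 := by norm_num

theorem stmt7 (K : Type) [Field K] [NumberField K]
    (hdeg : Module.finrank ℚ K = 2)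
    (σ₁ σ₂ : K →+* ℝ) (hσ : σ₁ ≠ σ₂) :
    ∃ c : ℝ, 0 < c ∧
      ∀ 𝔞 : Ideal (𝓞 K), 𝔞 ≠ ⊥ → Submodule.IsPrincipal 𝔞 →
        ∑' q : {q : 𝓞 K // Ideal.span {q} = 𝔞},
            1 / (embInt K σ₁ q ^ 2 + embInt K σ₂ q ^ 2) ≤
          c / (Ideal.absNorm 𝔞 : ℝ) := by
  classical
  have hF : {x : K | IsIntegral ℤ x ∧ ∀ φ : K →+* ℂ, ‖φ x‖ ≤ 2}.Finite :=
    NumberField.Embeddings.finite_of_norm_le K ℂ 2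
  set m := hF.toFinset.card with hm
  refine ⟨16 * ((m : ℝ) + 1), by positivity, ?_⟩
  intro 𝔞 h𝔞 _
  have hN0 : Ideal.absNorm 𝔞 ≠ 0 := by
    rw [Ne, Ideal.absNorm_eq_zero_iff]; exact h𝔞
  have hN : (0:ℝ) < (Ideal.absNorm 𝔞 : ℝ) := by
    exact_mod_cast Nat.pos_of_ne_zero hN0
  set N : ℝ := (Ideal.absNorm 𝔞 : ℝ) with hNdef
  apply tsum_le_of_sum_le' (div_nonneg (by positivity) hN.le)
  intro s
  have hgen : ∀ q : {q : 𝓞 K // Ideal.span {q} = 𝔞},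
      0 < |σ₁ (algebraMap (𝓞 K) K q.1)| ∧ 0 < |σ₂ (algebraMap (𝓞 K) K q.1)| ∧
      |σ₁ (algebraMap (𝓞 K) K q.1)| * |σ₂ (algebraMap (𝓞 K) K q.1)| = N := by
    intro q
    have hq0 : q.1 ≠ 0 := by
      intro h
      apply h𝔞
      rw [← q.2, h, Ideal.span_singleton_eq_bot.mpr rfl]
    have hqK : algebraMap (𝓞 K) K q.1 ≠ 0 := by
      intro h
      exact hq0 (NumberField.RingOfIntegers.coe_injective (by simpa using h))
    have h1 : σ₁ (algebraMap (𝓞 K) K q.1) ≠ 0 := by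
      intro h
      exact hqK (σ₁.injective (by rw [h, map_zero]))
    have h2 : σ₂ (algebraMap (𝓞 K) K q.1) ≠ 0 := by
      intro h
      exact hqK (σ₂.injective (by rw [h, map_zero]))
    refine ⟨abs_pos.mpr h1, abs_pos.mpr h2, ?_⟩
    have hg := aux_gen_norm K hdeg σ₁ σ₂ hσ q.1
    rw [q.2] at hg
    rw [hNdef]
    exact hg.symm
  set kf : {q : 𝓞 K // Ideal.span {q} = 𝔞} → ℤ :=
    fun q => Int.log 2 (|σ₁ (algebraMap (𝓞 K) K q.1)| / Real.sqrt N) with hkf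
  have hwin : ∀ q : {q : 𝓞 K // Ideal.span {q} = 𝔞},
      Real.sqrt N * (2:ℝ) ^ (kf q) ≤ |σ₁ (algebraMap (𝓞 K) K q.1)| ∧
      |σ₁ (algebraMap (𝓞 K) K q.1)| < Real.sqrt N * (2 * (2:ℝ) ^ (kf q)) := by
    intro q
    obtain ⟨hx, -, -⟩ := hgen q
    have hs0 : (0:ℝ) < Real.sqrt N := Real.sqrt_pos.mpr hN
    set x := |σ₁ (algebraMap (𝓞 K) K q.1)| with hxdef
    constructor
    · have h1' := Int.zpow_log_le_self (b := 2) (R := ℝ) (by norm_num) (div_pos hx hs0)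
      have h' : (2:ℝ) ^ (kf q) ≤ x / Real.sqrt N := by
        rw [hkf]
        exact_mod_cast h1'
      calc Real.sqrt N * (2:ℝ) ^ (kf q) ≤ Real.sqrt N * (x / Real.sqrt N) := by
            exact mul_le_mul_of_nonneg_left h' hs0.le
        _ = x := by field_simp
    · have h2' := Int.lt_zpow_succ_log_self (b := 2) (R := ℝ) (by norm_num) (x / Real.sqrt N)
      have hcast : ((2:ℕ):ℝ) ^ (Int.log 2 (x / Real.sqrt N) + 1)
          = 2 * (2:ℝ) ^ (kf q) := by
        push_cast
        rw [hkf, zpow_add₀ (by norm_num : (2:ℝ) ≠ 0)]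
        ring
      rw [hcast] at h2'
      calc x = Real.sqrt N * (x / Real.sqrt N) := by field_simp
        _ < Real.sqrt N * (2 * (2:ℝ) ^ (kf q)) := mul_lt_mul_of_pos_left h2' hs0
  have hterm : ∀ q : {q : 𝓞 K // Ideal.span {q} = 𝔞},
      1 / (embInt K σ₁ q.1 ^ 2 + embInt K σ₂ q.1 ^ 2)
        ≤ 4 / N * ((1:ℝ)/2) ^ (kf q).natAbs := by
    intro q
    obtain ⟨hx, hy, hxy⟩ := hgen q
    have := aux_geom_bound N (|σ₁ (algebraMap (𝓞 K) K q.1)|)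
      (|σ₂ (algebraMap (𝓞 K) K q.1)|) hN hx hy hxy
    simpa [embInt, sq_abs, hkf] using this
  have hfiber : ∀ j : ℤ, (s.filter (fun q => kf q = j)).card ≤ m := by
    intro j
    rcases (s.filter (fun q => kf q = j)).eq_empty_or_nonempty with he | ⟨q₀, hq₀⟩
    · rw [he]; simp
    rw [hm]
    have hq₀f := Finset.mem_filter.mp hq₀
    have hb0 : algebraMap (𝓞 K) K q₀.1 ≠ 0 := by
      intro h
      have hz : q₀.1 = 0 := NumberField.RingOfIntegers.coe_injective (by simpa using h)
      apply h𝔞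
      rw [← q₀.2, hz, Ideal.span_singleton_eq_bot.mpr rfl]
    apply Finset.card_le_card_of_injOn
      (fun q => algebraMap (𝓞 K) K q.1 * (algebraMap (𝓞 K) K q₀.1)⁻¹)
    · intro q hq
      have hqf := Finset.mem_filter.mp hq
      rw [Finset.mem_coe, Set.Finite.mem_toFinset]
      beta_reduce
      constructor
      · have hassoc : Associated q₀.1 q.1 := by
          rw [← Ideal.span_singleton_eq_span_singleton, q₀.2, q.2]
        obtain ⟨u, hu⟩ := hassoc
        have heq : algebraMap (𝓞 K) K q.1 * (algebraMap (𝓞 K) K q₀.1)⁻¹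
            = algebraMap (𝓞 K) K (u : 𝓞 K) := by
          rw [← hu, map_mul]
          field_simp
        rw [heq]
        exact NumberField.RingOfIntegers.isIntegral_coe _
      · intro φ
        obtain ⟨hwa1, hwa2⟩ := hwin q
        obtain ⟨hwb1, hwb2⟩ := hwin q₀
        rw [hqf.2] at hwa1 hwa2
        rw [hq₀f.2] at hwb1 hwb2
        obtain ⟨hxa, hya, hxya⟩ := hgen q
        obtain ⟨hxb, hyb, hxyb⟩ := hgen q₀
        have key1 : |σ₁ (algebraMap (𝓞 K) K q.1)| / |σ₁ (algebraMap (𝓞 K) K q₀.1)| ≤ 2 := by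
          rw [div_le_iff₀ hxb]
          nlinarith [hwa2, hwb1]
        have key2 : |σ₂ (algebraMap (𝓞 K) K q.1)| / |σ₂ (algebraMap (𝓞 K) K q₀.1)| ≤ 2 := by
          have ha2 : |σ₂ (algebraMap (𝓞 K) K q.1)|
              = N / |σ₁ (algebraMap (𝓞 K) K q.1)| := by
            rw [eq_div_iff hxa.ne']
            linarith [hxya]
          have hb2 : |σ₂ (algebraMap (𝓞 K) K q₀.1)|
              = N / |σ₁ (algebraMap (𝓞 K) K q₀.1)| := by
            rw [eq_div_iff hxb.ne']
            linarith [hxyb]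
          have hr : |σ₂ (algebraMap (𝓞 K) K q.1)| / |σ₂ (algebraMap (𝓞 K) K q₀.1)|
              = |σ₁ (algebraMap (𝓞 K) K q₀.1)| / |σ₁ (algebraMap (𝓞 K) K q.1)| := by
            rw [ha2, hb2, div_div_div_comm, div_self hN.ne']
            rw [one_div_div]
          rw [hr, div_le_iff₀ hxa]
          nlinarith [hwa1, hwb2]
        rcases aux_emb_cases K hdeg σ₁ σ₂ hσ φ with hφ | hφ <;> rw [hφ]
        · rw [RingHom.comp_apply, Complex.ofRealHom_eq_coe, Complex.norm_real,
            Real.norm_eq_abs, map_mul, map_inv₀, abs_mul, abs_inv, ← div_eq_mul_inv]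
          exact key1
        · rw [RingHom.comp_apply, Complex.ofRealHom_eq_coe, Complex.norm_real,
            Real.norm_eq_abs, map_mul, map_inv₀, abs_mul, abs_inv, ← div_eq_mul_inv]
          exact key2
    · intro q hq q' hq' heq
      simp only at heq
      have ha : algebraMap (𝓞 K) K q.1 = algebraMap (𝓞 K) K q'.1 :=
        mul_right_cancel₀ (inv_ne_zero hb0) heq
      exact Subtype.ext (NumberField.RingOfIntegers.coe_injective ha)
  calc ∑ q ∈ s, 1 / (embInt K σ₁ q.1 ^ 2 + embInt K σ₂ q.1 ^ 2)
      ≤ ∑ q ∈ s, 4 / N * ((1:ℝ)/2) ^ (kf q).natAbs :=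
        Finset.sum_le_sum (fun q _ => hterm q)
    _ = 4 / N * ∑ q ∈ s, ((1:ℝ)/2) ^ (kf q).natAbs := by rw [Finset.mul_sum]
    _ = 4 / N * ∑ j ∈ s.image kf,
          (s.filter (fun q => kf q = j)).card • ((1:ℝ)/2) ^ j.natAbs := by
        rw [Finset.sum_comp (fun j : ℤ => ((1:ℝ)/2) ^ j.natAbs) kf]
    _ ≤ 4 / N * ∑ j ∈ s.image kf, (m : ℝ) * ((1:ℝ)/2) ^ j.natAbs := by
        refine mul_le_mul_of_nonneg_left (Finset.sum_le_sum fun j _ => ?_) (by positivity)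
        rw [nsmul_eq_mul]
        exact mul_le_mul_of_nonneg_right (by exact_mod_cast hfiber j) (by positivity)
    _ = 4 / N * ((m : ℝ) * ∑ j ∈ s.image kf, ((1:ℝ)/2) ^ j.natAbs) := by
        rw [← Finset.mul_sum]
    _ ≤ 4 / N * ((m : ℝ) * 4) := by
        refine mul_le_mul_of_nonneg_left ?_ (by positivity)
        exact mul_le_mul_of_nonneg_left (aux_sum_geom _) (by positivity)
    _ ≤ 16 * ((m : ℝ) + 1) / N := by
        rw [div_mul_eq_mul_div]
        apply div_le_div_of_nonneg_right ?_ hN.le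
        nlinarith [Nat.cast_nonneg (α := ℝ) m]
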